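/- Let k be a positive integer and, for each n∈ℕ, let x_n∈ℝ³, σ_n>0 and y_{1,n},…,y_{k,n}∈ℝ³. Then there exist a constant C̄∈{0,5,10,…,5k} and a strictly increasing map φ:ℕ→ℕ such that for every n∈ℕ and every 1≤i≤k, the point y_{i,φ(n)} does not belong to the annulus B((C̄+5)·σ_{φ(n)}^{−1/2}, x_{φ(n)}) \ B(C̄·σ_{φ(n)}^{−1/2}, x_{φ(n)}), i.e. it is not the case that C̄·σ_{φ(n)}^{−1/2} ≤ |y_{i,φ(n)}−x_{φ(n)}| < (C̄+5)·σ_{φ(n)}^{−1/2}. -/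

import Mathlib

noncomputable section

/-- uniform choice, along a subsequence, of a "safe annulus"
avoiding the `k` families of points `y_{i,n}`. -/
theorem stmt16 (k : ℕ) (hk : 0 < k)
    (x : ℕ → EuclideanSpace ℝ (Fin 3)) (σ : ℕ → ℝ) (hσ : ∀ n, 0 < σ n)
    (y : Fin k → ℕ → EuclideanSpace ℝ (Fin 3)) :
    ∃ m : ℕ, m ≤ k ∧ ∃ φ : ℕ → ℕ, StrictMono φ ∧
      ∀ n : ℕ, ∀ i : Fin k,
        ¬((5 * m : ℝ) * (σ (φ n)) ^ (-(1/2) : ℝ) ≤ ‖y i (φ n) - x (φ n)‖ ∧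
          ‖y i (φ n) - x (φ n)‖ < ((5 * m : ℝ) + 5) * (σ (φ n)) ^ (-(1/2) : ℝ)) := by
  have main : ∀ n, ∃ m, m ≤ k ∧ ∀ i : Fin k,
      ¬((5 * m : ℝ) * (σ n) ^ (-(1/2) : ℝ) ≤ ‖y i n - x n‖ ∧
        ‖y i n - x n‖ < ((5 * m : ℝ) + 5) * (σ n) ^ (-(1/2) : ℝ)) := by
    intro n
    set s : ℝ := (σ n) ^ (-(1/2) : ℝ) with hs
    have hs0 : 0 < s := Real.rpow_pos_of_pos (hσ n) _
    set g : Fin k → ℕ := fun i => ⌊‖y i n - x n‖ / (5 * s)⌋₊ with hg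
    have hex : ∃ m ∈ Finset.range (k+1), m ∉ Finset.image g Finset.univ := by
      by_contra h
      push_neg at h
      have hsub : Finset.range (k+1) ⊆ Finset.image g Finset.univ := fun m hm => h m hm
      have h1 := Finset.card_le_card hsub
      have h2 : (Finset.image g Finset.univ).card ≤ k :=
        le_trans Finset.card_image_le (by simp)
      simp only [Finset.card_range] at h1
      omega
    obtain ⟨m, hm, hmem⟩ := hex
    refine ⟨m, Nat.lt_succ_iff.mp (Finset.mem_range.mp hm), ?_⟩
    rintro i ⟨h1, h2⟩
    apply hmem
    simp only [Finset.mem_image]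
    refine ⟨i, Finset.mem_univ i, ?_⟩
    show ⌊‖y i n - x n‖ / (5 * s)⌋₊ = m
    have h5s : (0:ℝ) < 5 * s := by positivity
    rw [Nat.floor_eq_iff (by positivity)]
    constructor
    · rw [le_div_iff₀ h5s]; nlinarith
    · rw [div_lt_iff₀ h5s]; push_cast; nlinarith
  choose f hfk hf using main
  have : ∃ b : Fin (k+1), (((fun n => (⟨f n, Nat.lt_succ_of_le (hfk n)⟩ : Fin (k+1)))) ⁻¹' {b}).Infinite := by
    obtain ⟨b, hb⟩ := Finite.exists_infinite_fiber
      (fun n => (⟨f n, Nat.lt_succ_of_le (hfk n)⟩ : Fin (k+1)))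
    exact ⟨b, Set.infinite_coe_iff.mp hb⟩
  obtain ⟨b, hb⟩ := this
  set p : ℕ → Prop := fun n => f n = b.1 with hp
  have hinf : (setOf p).Infinite := by
    apply hb.mono
    intro n hn
    simp only [Set.mem_preimage, Set.mem_singleton_iff] at hn
    exact congrArg Fin.val hn
  refine ⟨b.1, Nat.lt_succ_iff.mp b.2, Nat.nth p, Nat.nth_strictMono hinf, ?_⟩
  intro n i
  have hmem : p (Nat.nth p n) := Nat.nth_mem_of_infinite hinf n
  have := hf (Nat.nth p n) i
  rwa [hmem] at this
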